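/- Let a : ℕ → ℝ and b : ℕ → ℝ be nonnegative sequences supported on {0,...,n} and {0,...,m} respectively, each log-concave with no internal zeros. Then their convolution c_t = Σ_{i+j=t} a_i b_j is unimodal. -/

import Mathlib

open Finset

noncomputable def zext (a : ℕ → ℝ) : ℤ → ℝ := fun z => if 0 ≤ z then a z.toNat else 0

lemma zext_coe (a : ℕ → ℝ) (k : ℕ) : zext a k = a k := by simp [zext]

lemma zext_neg (a : ℕ → ℝ) (z : ℤ) (h : z < 0) : zext a z = 0 := by
  simp [zext, not_le.2 h]

lemma zext_nonneg (a : ℕ → ℝ) (h : ∀ i, 0 ≤ a i) (z : ℤ) : 0 ≤ zext a z := by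
  unfold zext; split
  · exact h _
  · exact le_refl 0

-- vanishing beyond n
lemma zext_big (n : ℕ) (a : ℕ → ℝ) (hasupp : ∀ i, n < i → a i = 0) (z : ℤ)
    (h : (n:ℤ) < z) : zext a z = 0 := by
  unfold zext
  split
  · apply hasupp; omega
  · rfl

section LC
variable (n : ℕ) (a : ℕ → ℝ)

-- basic log-concavity over ℤ
lemma zlc1 (ha0 : ∀ i, 0 ≤ a i) (hasupp : ∀ i, n < i → a i = 0)
    (halc : ∀ k, 1 ≤ k → k ≤ n - 1 → a k ^ 2 ≥ a (k - 1) * a (k + 1)) :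
    ∀ k : ℤ, zext a (k-1) * zext a (k+1) ≤ zext a k * zext a k := by
  intro k
  rcases lt_or_ge (k-1) 0 with h | h
  · rw [zext_neg a _ h]
    simpa using mul_self_nonneg (zext a k)
  · -- k ≥ 1
    obtain ⟨j, rfl⟩ : ∃ j : ℕ, k = (j:ℤ) + 1 := ⟨(k-1).toNat, by omega⟩
    have e1 : ((j:ℤ) + 1) - 1 = (j:ℤ) := by ring
    have e2 : ((j:ℤ) + 1) + 1 = ((j+2 : ℕ) : ℤ) := by push_cast; ring
    have e3 : ((j:ℤ) + 1) = ((j+1 : ℕ) : ℤ) := by push_cast; ring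
    rw [e1, e2, e3, zext_coe, zext_coe, zext_coe]
    rcases le_or_gt (j+1) (n-1) with hj | hj
    · have := halc (j+1) (by omega) hj
      have ej : j + 1 - 1 = j := by omega
      rw [ej] at this
      calc a j * a (j+2) = a (j+1-1) * (a (j+1+1)) := by norm_num
        _ ≤ a (j+1) * a (j+1) := by rw [ej]; nlinarith [halc (j+1) (by omega) hj]
    · have : a (j+2) = 0 := hasupp _ (by omega)
      rw [this, mul_zero]
      exact mul_nonneg (ha0 _) (ha0 _)

end LC

section LC2
variable (n : ℕ) (a : ℕ → ℝ)

-- interval support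
lemma zint (hasupp : ∀ i, n < i → a i = 0)
    (haniz : ¬ ∃ p q r, p < q ∧ q < r ∧ r ≤ n ∧ a p ≠ 0 ∧ a q = 0 ∧ a r ≠ 0) :
    ∀ p q r : ℤ, p ≤ q → q ≤ r → zext a p ≠ 0 → zext a r ≠ 0 → zext a q ≠ 0 := by
  intro p q r hpq hqr hp hr
  have hp0 : 0 ≤ p := by
    by_contra h; exact hp (zext_neg a p (by omega))
  have hq0 : 0 ≤ q := le_trans hp0 hpq
  have hr0 : 0 ≤ r := le_trans hq0 hqr
  obtain ⟨P, rfl⟩ : ∃ P : ℕ, p = (P:ℤ) := ⟨p.toNat, by omega⟩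
  obtain ⟨Q, rfl⟩ : ∃ Q : ℕ, q = (Q:ℤ) := ⟨q.toNat, by omega⟩
  obtain ⟨R, rfl⟩ : ∃ R : ℕ, r = (R:ℤ) := ⟨r.toNat, by omega⟩
  rw [zext_coe] at hp hr ⊢
  have hRn : R ≤ n := by
    by_contra h; exact hr (hasupp _ (by omega))
  rcases eq_or_lt_of_le (show P ≤ Q by exact_mod_cast hpq) with h1 | h1
  · rwa [← h1]
  rcases eq_or_lt_of_le (show Q ≤ R by exact_mod_cast hqr) with h2 | h2
  · rwa [h2]
  intro hq
  exact haniz ⟨P, Q, R, h1, h2, hRn, hp, hq, hr⟩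

-- generalized log-concavity over ℤ
lemma zlc2 (ha0 : ∀ i, 0 ≤ a i) (hasupp : ∀ i, n < i → a i = 0)
    (halc : ∀ k, 1 ≤ k → k ≤ n - 1 → a k ^ 2 ≥ a (k - 1) * a (k + 1))
    (haniz : ¬ ∃ p q r, p < q ∧ q < r ∧ r ≤ n ∧ a p ≠ 0 ∧ a q = 0 ∧ a r ≠ 0) :
    ∀ i j : ℤ, i ≤ j → zext a (i-1) * zext a (j+1) ≤ zext a i * zext a j := by
  have key : ∀ d : ℕ, ∀ i : ℤ, zext a (i-1) * zext a (i + d + 1) ≤ zext a i * zext a (i + d) := by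
    intro d
    induction d with
    | zero => intro i; simpa using zlc1 n a ha0 hasupp halc i
    | succ d ih =>
      intro i
      rcases eq_or_ne (zext a (i-1)) 0 with h | hm1
      · rw [h, zero_mul]
        exact mul_nonneg (zext_nonneg a ha0 _) (zext_nonneg a ha0 _)
      rcases eq_or_ne (zext a (i + (d+1:ℕ) + 1)) 0 with h | hp1
      · rw [h, mul_zero]
        exact mul_nonneg (zext_nonneg a ha0 _) (zext_nonneg a ha0 _)
      -- all entries between are nonzero
      have hint := zint n a hasupp haniz
      have hi : zext a i ≠ 0 := hint (i-1) i (i + (d+1:ℕ) + 1) (by omega) (by push_cast; omega) hm1 hp1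
      have hi1 : zext a (i+1) ≠ 0 := hint (i-1) (i+1) (i + (d+1:ℕ) + 1) (by omega) (by push_cast; omega) hm1 hp1
      have hipos : 0 < zext a i := lt_of_le_of_ne (zext_nonneg a ha0 _) (Ne.symm hi)
      have hi1pos : 0 < zext a (i+1) := lt_of_le_of_ne (zext_nonneg a ha0 _) (Ne.symm hi1)
      have h1 := zlc1 n a ha0 hasupp halc i
      have h2 := ih (i+1)
      have e1 : i + 1 + d = i + (d+1:ℕ) := by push_cast; ring
      have e2 : i + 1 + d + 1 = i + (d+1:ℕ) + 1 := by push_cast; ring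
      have e3 : i + 1 - 1 = i := by ring
      rw [e3, e1] at h2
      -- h1 : A(i-1)A(i+1) ≤ A i A i ; h2 : A i * A(i+(d+1)+1) ≤ A(i+1) * A(i+(d+1))
      have hall : 0 ≤ zext a (i + (d+1:ℕ) + 1) := zext_nonneg a ha0 _
      have hm1nn : 0 ≤ zext a (i-1) := zext_nonneg a ha0 _
      nlinarith [mul_nonneg hm1nn hall, mul_le_mul_of_nonneg_left h2 hm1nn]
  intro i j hij
  obtain ⟨d, rfl⟩ : ∃ d : ℕ, j = i + d := ⟨(j - i).toNat, by omega⟩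
  exact key d i

end LC2

lemma sum_Icc_sub (f : ℤ → ℝ) (lo hi : ℤ) (h1 : lo - 1 ≤ hi) (hlo : f (lo - 1) = 0) (hhi : f hi = 0) :
    ∑ i ∈ Finset.Icc lo hi, f (i-1) = ∑ i ∈ Finset.Icc lo hi, f i := by
  have e1 : Finset.Icc lo hi = (Finset.Icc (lo-1) (hi-1)).map (addRightEmbedding 1) := by
    rw [Finset.map_add_right_Icc]; congr 1 <;> ring
  have h2 : ∑ i ∈ Finset.Icc lo hi, f (i-1) = ∑ i ∈ Finset.Icc (lo-1) (hi-1), f i := by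
    rw [e1, Finset.sum_map]
    apply Finset.sum_congr rfl
    intro x _
    simp [addRightEmbedding]
  rw [h2]
  have h3 : ∑ i ∈ Finset.Icc (lo-1) (hi-1), f i = ∑ i ∈ Finset.Icc (lo-1) hi, f i := by
    apply Finset.sum_subset
    · apply Finset.Icc_subset_Icc_right; omega
    · intro x hx hnx
      simp only [Finset.mem_Icc] at hx hnx
      have : x = hi := by omega
      rwa [this]
  have h4 : ∑ i ∈ Finset.Icc lo hi, f i = ∑ i ∈ Finset.Icc (lo-1) hi, f i := by
    apply Finset.sum_subset
    · apply Finset.Icc_subset_Icc_left; omega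
    · intro x hx hnx
      simp only [Finset.mem_Icc] at hx hnx
      have : x = lo - 1 := by omega
      rwa [this]
  rw [h3, h4]

lemma sum_Icc_add (f : ℤ → ℝ) (lo hi : ℤ) (h1 : lo - 1 ≤ hi) (hlo : f lo = 0) (hhi : f (hi + 1) = 0) :
    ∑ i ∈ Finset.Icc lo hi, f (i+1) = ∑ i ∈ Finset.Icc lo hi, f i := by
  have := sum_Icc_sub (fun i => f (i+1)) lo hi h1 (by simpa using hlo) (by simpa using hhi)
  simp only [sub_add_cancel] at this
  exact this.symm

lemma conv_lc_abstract (n : ℤ) (hn : 0 ≤ n) (A B : ℤ → ℝ)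
    (hA0 : ∀ z, 0 ≤ A z)
    (hAsupp : ∀ z, z < 0 ∨ n < z → A z = 0)
    (hA2 : ∀ i j, i ≤ j → A (i-1) * A (j+1) ≤ A i * A j)
    (hB2 : ∀ i j, i ≤ j → B (i-1) * B (j+1) ≤ B i * B j)
    (C : ℤ → ℝ) (hC : ∀ t, C t = ∑ i ∈ Finset.Icc (-2:ℤ) (n+2), A i * B (t - i)) (s : ℤ) :
    C (s-1) * C (s+1) ≤ C s ^ 2 := by
  have hle : (-2:ℤ) - 1 ≤ n + 2 := by omega
  have hz : ∀ z : ℤ, (z < 0 ∨ n < z) → ∀ x : ℤ, A z * B x = 0 := by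
    intro z hzn x; rw [hAsupp z hzn, zero_mul]
  set J := Finset.Icc (-2:ℤ) (n+2) with hJ
  -- pointwise nonnegativity
  have hPnn : ∀ i j : ℤ, 0 ≤
      (A i * B (s-i)) * (A j * B (s-j)) - (A i * B (s-i+1)) * (A j * B (s-j-1))
      - (A (i-1) * B (s-i)) * (A (j+1) * B (s-j))
      + (A (i-1) * B (s-i+1)) * (A (j+1) * B (s-j-1)) := by
    intro i j
    have hfact : (A i * B (s-i)) * (A j * B (s-j)) - (A i * B (s-i+1)) * (A j * B (s-j-1))
      - (A (i-1) * B (s-i)) * (A (j+1) * B (s-j))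
      + (A (i-1) * B (s-i+1)) * (A (j+1) * B (s-j-1))
        = (A i * A j - A (i-1) * A (j+1)) *
          (B (s-i) * B (s-j) - B (s-i+1) * B (s-j-1)) := by ring
    rw [hfact]
    rcases lt_trichotomy i (j+1) with h | h | h
    · have f1 := hA2 i j (by omega)
      have f2 := hB2 (s-j) (s-i) (by omega)
      rw [show s - j - 1 = s - j - 1 from rfl] at f2
      apply mul_nonneg
      · linarith
      · nlinarith [f2]
    · rw [show i = j + 1 from h, show j + 1 - 1 = j from by ring]
      have : (A (j+1) * A j - A j * A (j+1)) = 0 := by ring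
      rw [this, zero_mul]
    · have f1 := hA2 (j+1) (i-1) (by omega)
      rw [show j + 1 - 1 = j from by ring, show i - 1 + 1 = i from by ring] at f1
      have f2 := hB2 (s-i+1) (s-j-1) (by omega)
      rw [show s - i + 1 - 1 = s - i from by ring, show s - j - 1 + 1 = s - j from by ring] at f2
      have h1 : A i * A j - A (i-1) * A (j+1) ≤ 0 := by linarith
      have h2 : B (s-i) * B (s-j) - B (s-i+1) * B (s-j-1) ≤ 0 := by nlinarith [f2]
      nlinarith [mul_nonneg (neg_nonneg.2 h1) (neg_nonneg.2 h2)]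
  -- four double-sum identities
  have hT1 : C s * C s = ∑ i ∈ J, ∑ j ∈ J, (A i * B (s-i)) * (A j * B (s-j)) := by
    rw [hC s]; exact Finset.sum_mul_sum _ _ _ _
  have hT2 : C (s+1) * C (s-1) = ∑ i ∈ J, ∑ j ∈ J, (A i * B (s-i+1)) * (A j * B (s-j-1)) := by
    rw [hC (s+1), hC (s-1), Finset.sum_mul_sum]
    apply Finset.sum_congr rfl; intro i _
    apply Finset.sum_congr rfl; intro j _
    rw [show s + 1 - i = s - i + 1 from by ring, show s - 1 - j = s - j - 1 from by ring]
  have sA1 : ∑ i ∈ J, A (i-1) * B (s - i) = C (s-1) := by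
    rw [hC (s-1), hJ]
    have key := sum_Icc_sub (fun i => A i * B (s - 1 - i)) (-2) (n+2) hle
      (hz _ (by omega) _) (hz _ (by omega) _)
    rw [← key]
    apply Finset.sum_congr rfl; intro i _
    show A (i-1) * B (s - i) = A (i-1) * B (s - 1 - (i-1))
    rw [show s - 1 - (i-1) = s - i from by ring]
  have sA2 : ∑ j ∈ J, A (j+1) * B (s - j) = C (s+1) := by
    rw [hC (s+1), hJ]
    have key := sum_Icc_add (fun j => A j * B (s + 1 - j)) (-2) (n+2) hle
      (hz _ (by omega) _) (hz _ (by omega) _)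
    rw [← key]
    apply Finset.sum_congr rfl; intro j _
    show A (j+1) * B (s - j) = A (j+1) * B (s + 1 - (j+1))
    rw [show s + 1 - (j+1) = s - j from by ring]
  have hT3 : C (s-1) * C (s+1) = ∑ i ∈ J, ∑ j ∈ J, (A (i-1) * B (s-i)) * (A (j+1) * B (s-j)) := by
    rw [← sA1, ← sA2]; exact Finset.sum_mul_sum _ _ _ _
  have sA3 : ∑ i ∈ J, A (i-1) * B (s - i + 1) = C s := by
    rw [hC s, hJ]
    have key := sum_Icc_sub (fun i => A i * B (s - i)) (-2) (n+2) hle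
      (hz _ (by omega) _) (hz _ (by omega) _)
    rw [← key]
    apply Finset.sum_congr rfl; intro i _
    show A (i-1) * B (s - i + 1) = A (i-1) * B (s - (i-1))
    rw [show s - (i-1) = s - i + 1 from by ring]
  have sA4 : ∑ j ∈ J, A (j+1) * B (s - j - 1) = C s := by
    rw [hC s, hJ]
    have key := sum_Icc_add (fun j => A j * B (s - j)) (-2) (n+2) hle
      (hz _ (by omega) _) (hz _ (by omega) _)
    rw [← key]
    apply Finset.sum_congr rfl; intro j _
    show A (j+1) * B (s - j - 1) = A (j+1) * B (s - (j+1))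
    rw [show s - (j+1) = s - j - 1 from by ring]
  have hT4 : C s * C s = ∑ i ∈ J, ∑ j ∈ J, (A (i-1) * B (s-i+1)) * (A (j+1) * B (s-j-1)) := by
    have : C s * C s = (∑ i ∈ J, A (i-1) * B (s - i + 1)) * (∑ j ∈ J, A (j+1) * B (s - j - 1)) := by
      rw [sA3, sA4]
    rw [this]; exact Finset.sum_mul_sum _ _ _ _
  -- sum everything
  have expand : (∑ i ∈ J, ∑ j ∈ J,
      ((A i * B (s-i)) * (A j * B (s-j)) - (A i * B (s-i+1)) * (A j * B (s-j-1))
      - (A (i-1) * B (s-i)) * (A (j+1) * B (s-j))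
      + (A (i-1) * B (s-i+1)) * (A (j+1) * B (s-j-1))))
      = (∑ i ∈ J, ∑ j ∈ J, (A i * B (s-i)) * (A j * B (s-j)))
      - (∑ i ∈ J, ∑ j ∈ J, (A i * B (s-i+1)) * (A j * B (s-j-1)))
      - (∑ i ∈ J, ∑ j ∈ J, (A (i-1) * B (s-i)) * (A (j+1) * B (s-j)))
      + (∑ i ∈ J, ∑ j ∈ J, (A (i-1) * B (s-i+1)) * (A (j+1) * B (s-j-1))) := by
    rw [← Finset.sum_sub_distrib, ← Finset.sum_sub_distrib, ← Finset.sum_add_distrib]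
    apply Finset.sum_congr rfl; intro i _
    rw [← Finset.sum_sub_distrib, ← Finset.sum_sub_distrib, ← Finset.sum_add_distrib]
  have hnn : (0:ℝ) ≤ ∑ i ∈ J, ∑ j ∈ J,
      ((A i * B (s-i)) * (A j * B (s-j)) - (A i * B (s-i+1)) * (A j * B (s-j-1))
      - (A (i-1) * B (s-i)) * (A (j+1) * B (s-j))
      + (A (i-1) * B (s-i+1)) * (A (j+1) * B (s-j-1))) :=
    Finset.sum_nonneg fun i _ => Finset.sum_nonneg fun j _ => hPnn i j
  have hsq : C s ^ 2 = C s * C s := by ring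
  have hcomm : C (s+1) * C (s-1) = C (s-1) * C (s+1) := mul_comm _ _
  rw [hsq]
  linarith [hnn, expand, hT1, hT2, hT3, hT4, hcomm]

noncomputable def zconv (n : ℕ) (a b : ℕ → ℝ) : ℤ → ℝ :=
  fun s => ∑ i ∈ Finset.Icc (-2:ℤ) ((n:ℤ)+2), zext a i * zext b (s - i)

lemma sum_Icc_int_eq_range (K : ℕ) (f : ℤ → ℝ) :
    ∑ i ∈ Finset.Icc (0:ℤ) (K:ℤ), f i = ∑ p ∈ Finset.range (K+1), f (p:ℤ) := by
  induction K with
  | zero => simp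
  | succ K ih =>
    rw [Finset.sum_range_succ, ← ih, show ((K+1:ℕ):ℤ) = (K:ℤ)+1 from by push_cast; ring]
    have hins : Finset.Icc (0:ℤ) ((K:ℤ)+1) = insert ((K:ℤ)+1) (Finset.Icc (0:ℤ) (K:ℤ)) := by
      ext z
      simp only [Finset.mem_Icc, Finset.mem_insert]
      omega
    rw [hins, Finset.sum_insert (by simp only [Finset.mem_Icc]; omega)]
    exact add_comm _ _

lemma zconv_eq (n : ℕ) (a b : ℕ → ℝ) (hasupp : ∀ i, n < i → a i = 0) (s : ℕ) :
    zconv n a b (s:ℤ) = ∑ p ∈ Finset.range (s+1), a p * b (s - p) := by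
  set K : ℕ := max n s with hK
  have hKn : n ≤ K := le_max_left _ _
  have hKs : s ≤ K := le_max_right _ _
  have h1 : zconv n a b (s:ℤ) = ∑ i ∈ Finset.Icc (0:ℤ) (K:ℤ), zext a i * zext b ((s:ℤ) - i) := by
    unfold zconv
    have e1 : ∑ i ∈ Finset.Icc (-2:ℤ) ((n:ℤ)+2), zext a i * zext b ((s:ℤ) - i)
        = ∑ i ∈ Finset.Icc (-2:ℤ) ((K:ℤ)+2), zext a i * zext b ((s:ℤ) - i) := by
      apply Finset.sum_subset
      · apply Finset.Icc_subset_Icc <;> omega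
      · intro z hz hnz
        simp only [Finset.mem_Icc] at hz hnz
        rw [zext_big n a hasupp z (by omega), zero_mul]
    have e2 : ∑ i ∈ Finset.Icc (0:ℤ) (K:ℤ), zext a i * zext b ((s:ℤ) - i)
        = ∑ i ∈ Finset.Icc (-2:ℤ) ((K:ℤ)+2), zext a i * zext b ((s:ℤ) - i) := by
      apply Finset.sum_subset
      · apply Finset.Icc_subset_Icc <;> omega
      · intro z hz hnz
        simp only [Finset.mem_Icc] at hz hnz
        rcases lt_or_ge z 0 with h | h
        · rw [zext_neg a z h, zero_mul]
        · rw [zext_big n a hasupp z (by omega), zero_mul]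
    rw [e1, ← e2]
  have h2 : ∑ p ∈ Finset.range (s+1), a p * b (s - p)
      = ∑ p ∈ Finset.range (K+1), zext a (p:ℤ) * zext b ((s:ℤ) - (p:ℤ)) := by
    rw [eq_comm]
    have hsub : Finset.range (s+1) ⊆ Finset.range (K+1) := by
      apply Finset.range_subset_range.2; omega
    rw [← Finset.sum_subset hsub ?van]
    case van =>
      intro p hp hnp
      simp only [Finset.mem_range] at hp hnp
      rw [zext_neg b ((s:ℤ) - (p:ℤ)) (by omega), mul_zero]
    apply Finset.sum_congr rfl
    intro p hp
    simp only [Finset.mem_range] at hp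
    rw [zext_coe a p, show (s:ℤ) - (p:ℤ) = ((s - p : ℕ) : ℤ) from by push_cast; omega, zext_coe]
  rw [h1, h2, sum_Icc_int_eq_range]

lemma decay (C : ℤ → ℝ) (h0 : ∀ s, 0 ≤ C s)
    (hlc : ∀ s, C (s-1) * C (s+1) ≤ C s ^ 2)
    (hniz : ∀ p q, p < q → C p ≠ 0 → C q = 0 → C (q+1) = 0)
    (i : ℤ) (hdec : C (i+1) < C i) :
    ∀ t : ℤ, i + 1 ≤ t → C t ≤ C (i+1) := by
  have key : ∀ d : ℕ, C (i + 1 + d) ≤ C (i+1) ∧ (C (i + 1 + d) < C (i + d) ∨ C (i + 1 + d) = 0) := by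
    intro d
    induction d with
    | zero =>
      constructor
      · simp
      · left; simpa using hdec
    | succ d ih =>
      obtain ⟨h1, h2⟩ := ih
      have e : ((d+1:ℕ):ℤ) = (d:ℤ) + 1 := by push_cast; ring
      rw [e]
      set u : ℤ := i + 1 + (d:ℤ) with hu
      have eu1 : i + 1 + ((d:ℤ) + 1) = u + 1 := by rw [hu]; ring
      have eu2 : i + ((d:ℤ) + 1) = u := by rw [hu]; ring
      have eu3 : i + (d:ℤ) = u - 1 := by rw [hu]; ring
      rw [eu1, eu2]
      rw [eu3] at h2
      rcases h2 with hlt | hz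
      · rcases eq_or_lt_of_le (h0 u) with hz0 | hpos
        · -- C u = 0, C (u-1) > 0
          have hu1 : C (u+1) = 0 := by
            have := hlc u
            rw [← hz0] at this
            have hun : 0 < C (u-1) := by rw [← hz0] at hlt; exact hlt
            nlinarith [h0 (u+1)]
          constructor
          · rw [hu1]; exact h0 _
          · right; exact hu1
        · -- C u > 0
          have := hlc u
          have hcu : C (u+1) < C u := by nlinarith
          constructor
          · linarith
          · left; exact hcu
      · -- C u = 0
        have hCi : C i ≠ 0 := ne_of_gt (lt_of_le_of_lt (h0 _) hdec)
        have hu1 : C (u+1) = 0 := hniz i u (by omega) hCi hz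
        constructor
        · rw [hu1]; exact h0 _
        · right; exact hu1
  intro t ht
  obtain ⟨d, rfl⟩ : ∃ d : ℕ, t = i + 1 + d := ⟨(t - (i+1)).toNat, by omega⟩
  exact (key d).1

lemma zconv_support (n m : ℕ) (a b : ℕ → ℝ)
    (ha0 : ∀ i, 0 ≤ a i) (hb0 : ∀ i, 0 ≤ b i)
    (hasupp : ∀ i, n < i → a i = 0) (hbsupp : ∀ i, m < i → b i = 0)
    (haniz : ¬ ∃ p q r, p < q ∧ q < r ∧ r ≤ n ∧ a p ≠ 0 ∧ a q = 0 ∧ a r ≠ 0)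
    (hbniz : ¬ ∃ p q r, p < q ∧ q < r ∧ r ≤ m ∧ b p ≠ 0 ∧ b q = 0 ∧ b r ≠ 0)
    (hane : ∃ i, a i ≠ 0) (hbne : ∃ j, b j ≠ 0) :
    ∃ L U : ℤ, 0 ≤ L ∧ L ≤ U ∧ U ≤ (m:ℤ) + n ∧
      (∀ s : ℤ, L ≤ s → s ≤ U → 0 < zconv n a b s) ∧
      (∀ s : ℤ, s < L ∨ U < s → zconv n a b s = 0) := by
  classical
  obtain ⟨ia, hia⟩ := hane
  obtain ⟨jb, hjb⟩ := hbne
  set Sa := (Finset.range (n+1)).filter (fun i => a i ≠ 0) with hSa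
  set Sb := (Finset.range (m+1)).filter (fun j => b j ≠ 0) with hSb
  have hSane : Sa.Nonempty := by
    refine ⟨ia, ?_⟩
    simp only [hSa, Finset.mem_filter, Finset.mem_range]
    refine ⟨?_, hia⟩
    by_contra h
    exact hia (hasupp ia (by omega))
  have hSbne : Sb.Nonempty := by
    refine ⟨jb, ?_⟩
    simp only [hSb, Finset.mem_filter, Finset.mem_range]
    refine ⟨?_, hjb⟩
    by_contra h
    exact hjb (hbsupp jb (by omega))
  set α₁ := Sa.min' hSane with hα₁
  set α₂ := Sa.max' hSane with hα₂
  set β₁ := Sb.min' hSbne with hβ₁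
  set β₂ := Sb.max' hSbne with hβ₂
  have hmemSa : ∀ i, i ∈ Sa ↔ (i ≤ n ∧ a i ≠ 0) := by
    intro i
    simp only [hSa, Finset.mem_filter, Finset.mem_range, Nat.lt_succ_iff]
  have hmemSb : ∀ j, j ∈ Sb ↔ (j ≤ m ∧ b j ≠ 0) := by
    intro j
    simp only [hSb, Finset.mem_filter, Finset.mem_range, Nat.lt_succ_iff]
  have haa1 : a α₁ ≠ 0 := ((hmemSa α₁).1 (Sa.min'_mem hSane)).2
  have haa2 : a α₂ ≠ 0 := ((hmemSa α₂).1 (Sa.max'_mem hSane)).2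
  have haa2n : α₂ ≤ n := ((hmemSa α₂).1 (Sa.max'_mem hSane)).1
  have hbb1 : b β₁ ≠ 0 := ((hmemSb β₁).1 (Sb.min'_mem hSbne)).2
  have hbb2 : b β₂ ≠ 0 := ((hmemSb β₂).1 (Sb.max'_mem hSbne)).2
  have hbb2m : β₂ ≤ m := ((hmemSb β₂).1 (Sb.max'_mem hSbne)).1
  have ha12 : α₁ ≤ α₂ := Sa.min'_le _ (Sa.max'_mem hSane)
  have hb12 : β₁ ≤ β₂ := Sb.min'_le _ (Sb.max'_mem hSbne)
  have haiff : ∀ i : ℕ, a i ≠ 0 ↔ (α₁ ≤ i ∧ i ≤ α₂) := by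
    intro i
    constructor
    · intro h
      have hin : i ∈ Sa := (hmemSa i).2 ⟨by by_contra hc; exact h (hasupp i (by omega)), h⟩
      exact ⟨Sa.min'_le _ hin, Sa.le_max' _ hin⟩
    · rintro ⟨h1, h2⟩
      have := zint n a hasupp haniz (α₁:ℤ) (i:ℤ) (α₂:ℤ) (by exact_mod_cast h1) (by exact_mod_cast h2)
        (by rw [zext_coe]; exact haa1) (by rw [zext_coe]; exact haa2)
      rwa [zext_coe] at this
  have hbiff : ∀ j : ℕ, b j ≠ 0 ↔ (β₁ ≤ j ∧ j ≤ β₂) := by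
    intro j
    constructor
    · intro h
      have hin : j ∈ Sb := (hmemSb j).2 ⟨by by_contra hc; exact h (hbsupp j (by omega)), h⟩
      exact ⟨Sb.min'_le _ hin, Sb.le_max' _ hin⟩
    · rintro ⟨h1, h2⟩
      have := zint m b hbsupp hbniz (β₁:ℤ) (j:ℤ) (β₂:ℤ) (by exact_mod_cast h1) (by exact_mod_cast h2)
        (by rw [zext_coe]; exact hbb1) (by rw [zext_coe]; exact hbb2)
      rwa [zext_coe] at this
  have hzaiff : ∀ z : ℤ, zext a z ≠ 0 ↔ ((α₁:ℤ) ≤ z ∧ z ≤ (α₂:ℤ)) := by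
    intro z
    rcases lt_or_ge z 0 with h | h
    · rw [zext_neg a z h]
      constructor
      · intro hc; exact absurd rfl hc
      · intro hc; omega
    · obtain ⟨Z, rfl⟩ : ∃ Z : ℕ, z = (Z:ℤ) := ⟨z.toNat, by omega⟩
      rw [zext_coe, haiff Z]
      constructor <;> intro hc <;> exact ⟨by exact_mod_cast hc.1, by exact_mod_cast hc.2⟩
  have hzbiff : ∀ z : ℤ, zext b z ≠ 0 ↔ ((β₁:ℤ) ≤ z ∧ z ≤ (β₂:ℤ)) := by
    intro z
    rcases lt_or_ge z 0 with h | h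
    · rw [zext_neg b z h]
      constructor
      · intro hc; exact absurd rfl hc
      · intro hc; omega
    · obtain ⟨Z, rfl⟩ : ∃ Z : ℕ, z = (Z:ℤ) := ⟨z.toNat, by omega⟩
      rw [zext_coe, hbiff Z]
      constructor <;> intro hc <;> exact ⟨by exact_mod_cast hc.1, by exact_mod_cast hc.2⟩
  refine ⟨(α₁:ℤ) + β₁, (α₂:ℤ) + β₂, by positivity, ?_, ?_, ?_, ?_⟩
  · have h1 : (α₁:ℤ) ≤ α₂ := by exact_mod_cast ha12
    have h2 : (β₁:ℤ) ≤ β₂ := by exact_mod_cast hb12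
    omega
  · have h1 : (α₂:ℤ) ≤ n := by exact_mod_cast haa2n
    have h2 : (β₂:ℤ) ≤ m := by exact_mod_cast hbb2m
    omega
  · intro s hL hU
    set i₀ : ℤ := max (α₁:ℤ) (s - β₂) with hi₀
    have hi₀mem : i₀ ∈ Finset.Icc (-2:ℤ) ((n:ℤ)+2) := by
      simp only [Finset.mem_Icc]
      have h1 : (α₁:ℤ) ≤ n := by exact_mod_cast le_trans ha12 haa2n
      have h3 : (α₂:ℤ) ≤ n := by exact_mod_cast haa2n
      have h0 : (0:ℤ) ≤ α₁ := by positivity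
      constructor
      · omega
      · have h2 : s - β₂ ≤ (α₂:ℤ) := by omega
        omega
    have hA : zext a i₀ ≠ 0 := by
      rw [hzaiff]
      have h1 : (α₁:ℤ) ≤ α₂ := by exact_mod_cast ha12
      constructor
      · exact le_max_left _ _
      · have h2 : s - β₂ ≤ (α₂:ℤ) := by omega
        omega
    have hB : zext b (s - i₀) ≠ 0 := by
      rw [hzbiff]
      have h2 : (β₁:ℤ) ≤ β₂ := by exact_mod_cast hb12
      constructor
      · have h1 : (β₁:ℤ) ≤ s - α₁ := by omega
        omega
      · have : s - β₂ ≤ i₀ := le_max_right _ _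
        omega
    have hterm : 0 < zext a i₀ * zext b (s - i₀) := by
      have h1 := zext_nonneg a ha0 i₀
      have h2 := zext_nonneg b hb0 (s - i₀)
      rcases lt_or_eq_of_le (mul_nonneg h1 h2) with h | h
      · exact h
      · exact absurd h.symm (mul_ne_zero hA hB)
    have hle := Finset.single_le_sum
      (f := fun i => zext a i * zext b (s - i))
      (fun i _ => mul_nonneg (zext_nonneg a ha0 i) (zext_nonneg b hb0 (s - i))) hi₀mem
    exact lt_of_lt_of_le hterm hle
  · intro s hs
    apply Finset.sum_eq_zero
    intro z _
    rcases eq_or_ne (zext a z) 0 with h | h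
    · rw [h, zero_mul]
    · have hz := (hzaiff z).1 h
      have : zext b (s - z) = 0 := by
        by_contra hc
        have := (hzbiff (s - z)).1 hc
        omega
      rw [this, mul_zero]

theorem convolution_unimodal (n m : ℕ) (a b : ℕ → ℝ)
    (ha0 : ∀ i, 0 ≤ a i) (hb0 : ∀ i, 0 ≤ b i)
    (hasupp : ∀ i, n < i → a i = 0) (hbsupp : ∀ i, m < i → b i = 0)
    (halc : ∀ k, 1 ≤ k → k ≤ n - 1 → a k ^ 2 ≥ a (k - 1) * a (k + 1))
    (hblc : ∀ k, 1 ≤ k → k ≤ m - 1 → b k ^ 2 ≥ b (k - 1) * b (k + 1))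
    (haniz : ¬ ∃ p q r, p < q ∧ q < r ∧ r ≤ n ∧ a p ≠ 0 ∧ a q = 0 ∧ a r ≠ 0)
    (hbniz : ¬ ∃ p q r, p < q ∧ q < r ∧ r ≤ m ∧ b p ≠ 0 ∧ b q = 0 ∧ b r ≠ 0) :
    ∃ k, k ≤ m + n ∧
      (∀ i, i < k → (∑ p ∈ Finset.range (i + 1), a p * b (i - p)) ≤
          ∑ p ∈ Finset.range (i + 2), a p * b (i + 1 - p)) ∧
      (∀ i, k ≤ i → i < m + n → (∑ p ∈ Finset.range (i + 2), a p * b (i + 1 - p)) ≤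
          ∑ p ∈ Finset.range (i + 1), a p * b (i - p)) := by
  classical
  by_cases hane : ∃ i, a i ≠ 0
  swap
  · push_neg at hane
    refine ⟨0, by omega, ?_, ?_⟩
    · intro i hi; omega
    · intro i _ _
      have hz : ∀ (N s : ℕ), ∑ p ∈ Finset.range N, a p * b (s - p) = 0 :=
        fun N s => Finset.sum_eq_zero fun p _ => by rw [hane p, zero_mul]
      rw [hz, hz]
  by_cases hbne : ∃ j, b j ≠ 0
  swap
  · push_neg at hbne
    refine ⟨0, by omega, ?_, ?_⟩
    · intro i hi; omega
    · intro i _ _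
      have hz : ∀ (N s : ℕ), ∑ p ∈ Finset.range N, a p * b (s - p) = 0 :=
        fun N s => Finset.sum_eq_zero fun p _ => by rw [hbne (s - p), mul_zero]
      rw [hz, hz]
  -- main case
  have hbr : ∀ s : ℕ, (∑ p ∈ Finset.range (s+1), a p * b (s-p)) = zconv n a b (s:ℤ) :=
    fun s => (zconv_eq n a b hasupp s).symm
  obtain ⟨L, U, hL0, hLU, hUmn, hpos, hvan⟩ :=
    zconv_support n m a b ha0 hb0 hasupp hbsupp haniz hbniz hane hbne
  have hC0 : ∀ s : ℤ, 0 ≤ zconv n a b s := fun s =>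
    Finset.sum_nonneg fun i _ => mul_nonneg (zext_nonneg a ha0 i) (zext_nonneg b hb0 (s - i))
  have hAsupp : ∀ z : ℤ, z < 0 ∨ (n:ℤ) < z → zext a z = 0 := by
    intro z hz
    rcases hz with h | h
    · exact zext_neg a z h
    · exact zext_big n a hasupp z h
  have hlcC : ∀ s : ℤ, zconv n a b (s-1) * zconv n a b (s+1) ≤ zconv n a b s ^ 2 :=
    fun s => conv_lc_abstract (n:ℤ) (by positivity) (zext a) (zext b)
      (zext_nonneg a ha0) hAsupp
      (zlc2 n a ha0 hasupp halc haniz) (zlc2 m b hb0 hbsupp hblc hbniz)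
      (zconv n a b) (fun t => rfl) s
  have hCniz : ∀ p q : ℤ, p < q → zconv n a b p ≠ 0 → zconv n a b q = 0 →
      zconv n a b (q+1) = 0 := by
    intro p q hpq hp hq
    have hpin : L ≤ p ∧ p ≤ U := by
      by_contra h
      exact hp (hvan p (by omega))
    have hqout : q < L ∨ U < q := by
      by_contra h
      push_neg at h
      exact (ne_of_gt (hpos q h.1 h.2)) hq
    exact hvan (q+1) (Or.inr (by omega))
  obtain ⟨k₀, hk₀mem, hk₀max⟩ := Finset.exists_max_image
    (Finset.Icc (0:ℤ) ((m:ℤ)+n)) (zconv n a b) ⟨0, by simp [Finset.mem_Icc]; positivity⟩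
  have hk₀ : 0 ≤ k₀ ∧ k₀ ≤ (m:ℤ)+n := Finset.mem_Icc.1 hk₀mem
  refine ⟨k₀.toNat, by omega, ?_, ?_⟩
  · intro i hi
    rw [hbr i]
    have h2 := hbr (i+1)
    rw [show i+1+1 = i+2 by omega] at h2
    rw [h2, show ((i+1:ℕ):ℤ) = (i:ℤ)+1 by push_cast; ring]
    by_contra hlt
    push_neg at hlt
    have hdec := decay (zconv n a b) hC0 hlcC hCniz (i:ℤ) hlt k₀ (by omega)
    have hmax_i := hk₀max (i:ℤ) (Finset.mem_Icc.2 ⟨by positivity, by omega⟩)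
    linarith
  · intro i hki him
    have h2 := hbr (i+1)
    rw [show i+1+1 = i+2 by omega] at h2
    rw [h2, hbr i, show ((i+1:ℕ):ℤ) = (i:ℤ)+1 by push_cast; ring]
    by_contra hlt
    push_neg at hlt
    have hDlc : ∀ s : ℤ, zconv n a b ((i:ℤ)+1-(s-1)) * zconv n a b ((i:ℤ)+1-(s+1))
        ≤ zconv n a b ((i:ℤ)+1-s) ^ 2 := by
      intro s
      have h := hlcC ((i:ℤ)+1-s)
      rw [show (i:ℤ)+1-(s-1) = ((i:ℤ)+1-s)+1 by ring, show (i:ℤ)+1-(s+1) = ((i:ℤ)+1-s)-1 by ring,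
        mul_comm]
      exact h
    have hDniz : ∀ p q : ℤ, p < q → zconv n a b ((i:ℤ)+1-p) ≠ 0 →
        zconv n a b ((i:ℤ)+1-q) = 0 → zconv n a b ((i:ℤ)+1-(q+1)) = 0 := by
      intro p q hpq hp hq
      have hpin : L ≤ (i:ℤ)+1-p ∧ (i:ℤ)+1-p ≤ U := by
        by_contra h
        exact hp (hvan _ (by omega))
      have hqout : (i:ℤ)+1-q < L ∨ U < (i:ℤ)+1-q := by
        by_contra h
        push_neg at h
        exact (ne_of_gt (hpos _ h.1 h.2)) hq
      exact hvan _ (Or.inl (by omega))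
    have hDdec : zconv n a b ((i:ℤ)+1-(0+1)) < zconv n a b ((i:ℤ)+1-0) := by
      rw [show (i:ℤ)+1-(0+1) = (i:ℤ) by ring, show (i:ℤ)+1-0 = (i:ℤ)+1 by ring]
      exact hlt
    have hdec := decay (fun s => zconv n a b ((i:ℤ)+1-s)) (fun s => hC0 _) hDlc hDniz 0 hDdec
      ((i:ℤ)+1-k₀) (by omega)
    rw [show (i:ℤ)+1-((i:ℤ)+1-k₀) = k₀ by ring, show (i:ℤ)+1-(0+1) = (i:ℤ) by ring] at hdec
    have hmax := hk₀max ((i:ℤ)+1) (Finset.mem_Icc.2 ⟨by positivity, by omega⟩)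
    linarith
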